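/- If a set of tile types T = {T₁, ..., T_n} tiles the quadrant ℕ × ℕ (i.e., there is a function t : ℕ × ℕ → T such that horizontally adjacent tiles match on right/left colors and vertically adjacent tiles match on up/down colors), then the MLSR formula φ_T (the conjunction of Func, Conf, Unique, Vert, Horiz as defined in the context) is satisfiable: the model with domain ℕ × ℕ, R_u relating (n,m) to (n,m+1), R_r relating (n,m) to (n+1,m), and valuation making t_i true exactly at points tiled by T_i, satisfies φ_T at every point. -/
import Mathlib


/-- MLSR with two modalities ◇_u, ◇_r, a universal modality U,
and the removal modality. -/
inductive Form2 : Type where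
  | atom : ℕ → Form2
  | top : Form2
  | neg : Form2 → Form2
  | or : Form2 → Form2 → Form2
  | diau : Form2 → Form2
  | diar : Form2 → Form2
  | uni : Form2 → Form2
  | rem : Form2 → Form2 → Form2

/-- A model with two accessibility relations R_u and R_r. -/
structure Model2 (W : Type) where
  Ru : W → W → Prop
  Rr : W → W → Prop
  V : ℕ → W → Prop

/-- Truth relative to a current domain `D` (so ⟨-φ⟩ψ deletes a point). -/
def Sat2 {W : Type} (M : Model2 W) : Form2 → Set W → W → Prop
  | .atom p, _, s => M.V p s
  | .top, _, _ => True
  | .neg φ, D, s => ¬ Sat2 M φ D s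
  | .or φ ψ, D, s => Sat2 M φ D s ∨ Sat2 M ψ D s
  | .diau φ, D, s => ∃ t ∈ D, M.Ru s t ∧ Sat2 M φ D t
  | .diar φ, D, s => ∃ t ∈ D, M.Rr s t ∧ Sat2 M φ D t
  | .uni φ, D, _ => ∀ t ∈ D, Sat2 M φ D t
  | .rem φ ψ, D, s => ∃ t ∈ D, t ≠ s ∧ Sat2 M φ D t ∧ Sat2 M ψ (D \ {t}) s

def Form2.and (a b : Form2) : Form2 := .neg (.or (.neg a) (.neg b))
def Form2.impl (a b : Form2) : Form2 := .or (.neg a) b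
def bigAnd2 (l : List Form2) : Form2 := l.foldr Form2.and .top
def bigOr2 (l : List Form2) : Form2 := l.foldr .or (.neg .top)

/-- A tile type with colors on its four edges. -/
structure Tile where
  up : ℕ
  right : ℕ
  down : ℕ
  left : ℕ

/-- (Func): U⟨-⊤⟩(□_u⊥ ∧ ◇_r⊤) ∧ U⟨-⊤⟩(□_r⊥ ∧ ◇_u⊤). -/
def funcF : Form2 :=
  Form2.and
    (.uni (.rem .top (Form2.and (.neg (.diau .top)) (.diar .top))))
    (.uni (.rem .top (Form2.and (.neg (.diar .top)) (.diau .top))))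

/-- (Conf): U⟨-⊤⟩(◇_r□_u⊥ ∧ ◇_u□_r⊥). -/
def confF : Form2 :=
  .uni (.rem .top (Form2.and (.diar (.neg (.diau .top))) (.diau (.neg (.diar .top)))))

/-- (Unique): U(⋁ᵢ tᵢ ∧ ⋀_{i<j}(tᵢ → ¬tⱼ)), where tᵢ is the atom i. -/
def uniqueF (n : ℕ) : Form2 :=
  .uni (Form2.and
    (bigOr2 ((List.finRange n).map fun i => .atom i.1))
    (bigAnd2 ((List.finRange n).map fun i =>
      bigAnd2 ((List.finRange n).filterMap fun j =>
        if i < j then some (Form2.impl (.atom i.1) (.neg (.atom j.1))) else none))))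

/-- (Vert): U⋀ᵢ(tᵢ → ◇_u ⋁_{j : u(Tᵢ)=d(Tⱼ)} tⱼ). -/
def vertF (n : ℕ) (T : Fin n → Tile) : Form2 :=
  .uni (bigAnd2 ((List.finRange n).map fun i =>
    Form2.impl (.atom i.1) (.diau (bigOr2 ((List.finRange n).filterMap fun j =>
      if (T i).up = (T j).down then some (.atom j.1) else none)))))

/-- (Horiz): U⋀ᵢ(tᵢ → ◇_r ⋁_{j : r(Tᵢ)=l(Tⱼ)} tⱼ). -/
def horizF (n : ℕ) (T : Fin n → Tile) : Form2 :=
  .uni (bigAnd2 ((List.finRange n).map fun i =>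
    Form2.impl (.atom i.1) (.diar (bigOr2 ((List.finRange n).filterMap fun j =>
      if (T i).right = (T j).left then some (.atom j.1) else none)))))

/-- φ_T: the conjunction Func ∧ Conf ∧ Unique ∧ Vert ∧ Horiz. -/
def phiT (n : ℕ) (T : Fin n → Tile) : Form2 :=
  bigAnd2 [funcF, confF, uniqueF n, vertF n T, horizF n T]


theorem sat_and {W : Type} {M : Model2 W} {a b : Form2} {D : Set W} {s : W} :
    Sat2 M (Form2.and a b) D s ↔ Sat2 M a D s ∧ Sat2 M b D s := by
  simp [Form2.and, Sat2]

theorem sat_bigAnd {W : Type} {M : Model2 W} {l : List Form2} {D : Set W} {s : W} :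
    Sat2 M (bigAnd2 l) D s ↔ ∀ f ∈ l, Sat2 M f D s := by
  induction l with
  | nil => simp [bigAnd2, Sat2]
  | cons a l ih =>
    rw [show bigAnd2 (a :: l) = Form2.and a (bigAnd2 l) from rfl, sat_and, ih]
    simp

theorem sat_bigOr {W : Type} {M : Model2 W} {l : List Form2} {D : Set W} {s : W} :
    Sat2 M (bigOr2 l) D s ↔ ∃ f ∈ l, Sat2 M f D s := by
  induction l with
  | nil => simp [bigOr2, Sat2]
  | cons a l ih =>
    rw [show bigOr2 (a :: l) = Form2.or a (bigOr2 l) from rfl]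
    rw [show Sat2 M (Form2.or a (bigOr2 l)) D s = (Sat2 M a D s ∨ Sat2 M (bigOr2 l) D s) from rfl, ih]
    simp

/-- If T tiles ℕ × ℕ, then φ_T holds at every point of the grid model
(R_u = vertical successor, R_r = horizontal successor, atom i true exactly
at points tiled by the i-th tile type). -/
theorem stmt14 (n : ℕ) (T : Fin n → Tile) (til : ℕ × ℕ → Fin n)
    (hh : ∀ a b : ℕ, (T (til (a, b))).right = (T (til (a + 1, b))).left)
    (hv : ∀ a b : ℕ, (T (til (a, b))).up = (T (til (a, b + 1))).down) :
    ∀ s : ℕ × ℕ,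
      Sat2 (⟨fun p q => q = (p.1, p.2 + 1),
             fun p q => q = (p.1 + 1, p.2),
             fun i p => (til p : ℕ) = i⟩ : Model2 (ℕ × ℕ))
        (phiT n T) Set.univ s := by
  intro s
  set M : Model2 (ℕ × ℕ) :=
    ⟨fun p q => q = (p.1, p.2 + 1), fun p q => q = (p.1 + 1, p.2),
     fun i p => (til p : ℕ) = i⟩ with hM
  rw [phiT, sat_bigAnd]
  simp only [List.mem_cons, List.not_mem_nil, or_false]
  rintro f (rfl | rfl | rfl | rfl | rfl)
  · -- Func
    rw [funcF, sat_and]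
    constructor
    · rintro ⟨a, b⟩ -
      refine ⟨(a, b + 1), trivial, ?_, trivial, ?_⟩
      · simp
      · rw [sat_and]
        constructor
        · rintro ⟨q, hq, hR, -⟩
          simp only [hM] at hR
          subst hR
          simp at hq
        · exact ⟨(a + 1, b), by simp, rfl, trivial⟩
    · rintro ⟨a, b⟩ -
      refine ⟨(a + 1, b), trivial, ?_, trivial, ?_⟩
      · simp
      · rw [sat_and]
        constructor
        · rintro ⟨q, hq, hR, -⟩
          simp only [hM] at hR
          subst hR
          simp at hq
        · exact ⟨(a, b + 1), by simp, rfl, trivial⟩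
  · -- Conf
    rintro ⟨a, b⟩ -
    refine ⟨(a + 1, b + 1), trivial, by simp, trivial, ?_⟩
    rw [sat_and]
    constructor
    · refine ⟨(a + 1, b), by simp, rfl, ?_⟩
      rintro ⟨q, hq, hR, -⟩
      simp only [hM] at hR
      subst hR
      simp at hq
    · refine ⟨(a, b + 1), by simp, rfl, ?_⟩
      rintro ⟨q, hq, hR, -⟩
      simp only [hM] at hR
      subst hR
      simp at hq
  · -- Unique
    rintro t -
    rw [sat_and]
    constructor
    · rw [sat_bigOr]
      refine ⟨.atom (til t).1, ?_, rfl⟩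
      simp only [List.mem_map]
      exact ⟨til t, List.mem_finRange _, rfl⟩
    · rw [sat_bigAnd]
      simp only [List.mem_map]
      rintro f ⟨i, -, rfl⟩
      rw [sat_bigAnd]
      simp only [List.mem_filterMap]
      rintro f ⟨j, -, hj⟩
      split_ifs at hj with hij
      · cases hj
        by_cases h : (til t : ℕ) = (i : ℕ)
        · exact Or.inr fun hj' => absurd (h.symm.trans hj') (Nat.ne_of_lt hij)
        · exact Or.inl h
  · -- Vert
    rintro ⟨a, b⟩ -
    rw [sat_bigAnd]
    simp only [List.mem_map]
    rintro f ⟨i, -, rfl⟩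
    by_cases hi : (til (a, b) : ℕ) = i.1
    · right
      have hii : til (a, b) = i := Fin.val_injective hi
      refine ⟨(a, b + 1), trivial, rfl, ?_⟩
      rw [sat_bigOr]
      refine ⟨.atom (til (a, b + 1)).1, ?_, rfl⟩
      simp only [List.mem_filterMap]
      refine ⟨til (a, b + 1), List.mem_finRange _, ?_⟩
      rw [if_pos (by rw [← hii]; exact hv a b)]
    · left
      exact hi
  · -- Horiz
    rintro ⟨a, b⟩ -
    rw [sat_bigAnd]
    simp only [List.mem_map]
    rintro f ⟨i, -, rfl⟩
    by_cases hi : (til (a, b) : ℕ) = i.1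
    · right
      have hii : til (a, b) = i := Fin.val_injective hi
      refine ⟨(a + 1, b), trivial, rfl, ?_⟩
      rw [sat_bigOr]
      refine ⟨.atom (til (a + 1, b)).1, ?_, rfl⟩
      simp only [List.mem_filterMap]
      refine ⟨til (a + 1, b), List.mem_finRange _, ?_⟩
      rw [if_pos (by rw [← hii]; exact hh a b)]
    · left
      exact hi
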